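/- Fix a partition λ and an integer n ≥ 1. Then ∑_{μ ⊇ λ, |μ| = |λ|+n} a'(μ)·e_α(μ/λ)² equals ∑_{ν ⊆ λ, |ν| = |λ|−n} a'(ν)·e_α(λ/ν)² if n is even, and equals ∑_{ν ⊆ λ, |ν| = |λ|−n+1} a'(ν)·e_α(λ/ν)² − ∑_{ν ⊆ λ, |ν| = |λ|−n} a'(ν)·e_α(λ/ν)² if n is odd (sums over partitions containing, respectively contained in, λ; empty sums are 0). -/

import Mathlib

open scoped Classical

/-- An integer partition: a weakly decreasing sequence of naturals (rows indexed
from `0`) which is eventually zero. -/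
structure YPart where
  part : ℕ → ℕ
  antitone' : Antitone part
  finite' : ∃ N : ℕ, ∀ n : ℕ, N ≤ n → part n = 0

namespace YPart

/-- Containment of Young diagrams. -/
instance : PartialOrder YPart where
  le p q := ∀ i, p.part i ≤ q.part i
  le_refl p i := le_refl _
  le_trans p q r h h' i := (h i).trans (h' i)
  le_antisymm p q h h' := by
    cases p; cases q
    simp only [mk.injEq]
    funext i
    exact le_antisymm (h i) (h' i)

/-- The empty partition is the minimum of Young's lattice. -/
instance : OrderBot YPart where
  bot := ⟨fun _ => 0, fun _ _ _ => le_refl 0, ⟨0, fun _ _ => rfl⟩⟩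
  bot_le p i := Nat.zero_le _

/-- The number of boxes `|λ|`. -/
noncomputable def weight (p : YPart) : ℕ := ∑ᶠ i, p.part i

/-- `a(λ) = (−1)^{λ₂ + λ₄ + λ₆ + ⋯}` (even-numbered rows in 1-based indexing). -/
noncomputable def aSign (p : YPart) : ℤ := (-1) ^ (∑ᶠ i : ℕ, p.part (2 * i + 1))

lemma conjSet_finite (p : YPart) (j : ℕ) : {i : ℕ | j + 1 ≤ p.part i}.Finite := by
  obtain ⟨N, hN⟩ := p.finite'
  apply Set.Finite.subset (Set.finite_Iio N)
  intro i hi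
  simp only [Set.mem_setOf_eq] at hi
  simp only [Set.mem_Iio]
  by_contra h
  push_neg at h
  have := hN i h
  omega

/-- The conjugate partition `λ'`: `λ'_j = #{i : λ_i ≥ j}` (rows indexed from 0). -/
noncomputable def conj (p : YPart) : YPart where
  part j := {i : ℕ | j + 1 ≤ p.part i}.ncard
  antitone' := by
    intro a b hab
    refine Set.ncard_le_ncard ?_ (conjSet_finite p a)
    intro i hi
    simp only [Set.mem_setOf_eq] at hi ⊢
    omega
  finite' := by
    refine ⟨p.part 0, fun j hj => ?_⟩
    show ({i : ℕ | j + 1 ≤ p.part i}).ncard = 0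
    have h : {i : ℕ | j + 1 ≤ p.part i} = ∅ := by
      ext i
      simp only [Set.mem_setOf_eq, Set.mem_empty_iff_false, iff_false, not_le]
      have := p.antitone' (Nat.zero_le i)
      omega
    rw [h]
    simp

/-- `a'(λ) = a(λ')`. -/
noncomputable def aconj (p : YPart) : ℤ := aSign (conj p)

/-- The (0-based) row index of the box added in a cover `p ⋖ q`: the first
index where the two partitions differ. -/
noncomputable def boxRow (p q : YPart) : ℕ := sInf {i : ℕ | p.part i ≠ q.part i}

/-- `s_α(μ ⋖ λ) = (−1)^{μ₁ + ⋯ + μ_i}` where the added box lies in (1-based) row `i`. -/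
noncomputable def salpha (p q : YPart) : ℤ :=
  (-1) ^ (∑ j ∈ Finset.range (boxRow p q + 1), p.part j)

/-- `s_β(μ ⋖ λ) = a(λ) a(μ) s_α(μ ⋖ λ)`. -/
noncomputable def sbeta (p q : YPart) : ℤ := aSign q * aSign p * salpha p q

end YPart

namespace SDP

variable {P : Type*} [PartialOrder P] [OrderBot P]

/-- The sign of a saturated chain, recorded as a list: the product of the
edge signs `s` over consecutive pairs. -/
def chainSign {α : Type*} (s : α → α → ℤ) : List α → ℤ
  | [] => 1
  | [_] => 1
  | x :: y :: rest => s x y * chainSign s (y :: rest)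

/-- Maximal chains from `⊥` to `x`: lists whose consecutive entries are covers,
starting at `⊥` and ending at `x`. -/
def chainsTo (x : P) : Set (List P) :=
  {l : List P | l.Chain' (· ⋖ ·) ∧ l.head? = some (⊥ : P) ∧ l.getLast? = some x}

/-- `e(x)`: the signed sum of maximal chains from `⊥` to `x`. -/
noncomputable def e (s : P → P → ℤ) (x : P) : ℤ :=
  ∑ᶠ l ∈ chainsTo x, chainSign s l

variable (K : Type*) [Field K]

/-- The up operator on `K̂P`, written coefficientwise:
`(U f)(y) = ∑_{x ⋖ y} s(x ⋖ y) f(x)`. -/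
noncomputable def Uop (s : P → P → ℤ) (f : P → K) : P → K :=
  fun y => ∑ᶠ x ∈ {x : P | x ⋖ y}, (s x y : K) * f x

/-- The down operator on `K̂P`, written coefficientwise:
`(D f)(x) = ∑_{y ⋗ x} s(x ⋖ y) v(y) v(x) f(y)`. -/
noncomputable def Dop (s : P → P → ℤ) (v : P → ℤ) (f : P → K) : P → K :=
  fun x => ∑ᶠ y ∈ {y : P | x ⋖ y}, (s x y : K) * (v y : K) * (v x : K) * f y

end SDP

namespace SDP

/-- Saturated chains from `p` to `q`. -/
def chainsBetween {P : Type*} [PartialOrder P] (p q : P) : Set (List P) :=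
  {l : List P | l.Chain' (· ⋖ ·) ∧ l.head? = some p ∧ l.getLast? = some q}

/-- Skew signed chain sum `e(q/p)`: the signed sum over all saturated chains
from `p` to `q` of the product of the edge signs. -/
noncomputable def eskew {P : Type*} [PartialOrder P] (s : P → P → ℤ) (p q : P) : ℤ :=
  ∑ᶠ l ∈ chainsBetween p q, chainSign s l

end SDP

namespace YPart
lemma le_def {p q : YPart} : p ≤ q ↔ ∀ i, p.part i ≤ q.part i := Iff.rfl

lemma ext' {p q : YPart} (h : ∀ i, p.part i = q.part i) : p = q := by
  cases p; cases q; simp only [mk.injEq]; exact funext h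

/-- a bound for p -/
noncomputable def nb (p : YPart) : ℕ := p.finite'.choose

lemma part_nb {p : YPart} {i : ℕ} (h : nb p ≤ i) : p.part i = 0 := p.finite'.choose_spec i h

lemma weight_eq_sum {p : YPart} {M : ℕ} (h : ∀ i, M ≤ i → p.part i = 0) :
    weight p = ∑ i ∈ Finset.range M, p.part i := by
  apply finsum_eq_sum_of_support_subset
  intro i hi
  simp only [Function.mem_support] at hi
  simp only [Finset.coe_range, Set.mem_Iio]
  by_contra hc
  exact hi (h i (by omega))

lemma weight_eq_sum' (p : YPart) {M : ℕ} (h : nb p ≤ M) :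
    weight p = ∑ i ∈ Finset.range M, p.part i :=
  weight_eq_sum (fun i hi => part_nb (le_trans h hi))

lemma weight_mono {p q : YPart} (h : p ≤ q) : weight p ≤ weight q := by
  rw [weight_eq_sum' p (le_max_left (nb p) (nb q)), weight_eq_sum' q (le_max_right (nb p) (nb q))]
  exact Finset.sum_le_sum (fun i _ => h i)

lemma weight_lt {p q : YPart} (h : p ≤ q) (hne : p ≠ q) : weight p < weight q := by
  have : ∃ i, p.part i < q.part i := by
    by_contra hc
    push_neg at hc
    exact hne (ext' fun i => le_antisymm (h i) (hc i))
  obtain ⟨i, hi⟩ := this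
  have hM : i < max (max (nb p) (nb q)) (i+1) := by omega
  rw [weight_eq_sum' p (le_trans (le_max_left _ _) (le_max_left _ _)),
      weight_eq_sum' q (le_trans (le_max_right _ _) (le_max_left _ _))]
  exact Finset.sum_lt_sum (fun j _ => h j) ⟨i, Finset.mem_range.mpr hM, hi⟩

lemma eq_of_le_weight {p q : YPart} (h : p ≤ q) (hw : weight p = weight q) : p = q := by
  by_contra hc
  exact absurd hw (Nat.ne_of_lt (weight_lt h hc))

lemma part_le_weight (p : YPart) (i : ℕ) : p.part i ≤ weight p := by
  rw [weight_eq_sum' p (le_max_left (nb p) (i+1))]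
  exact Finset.single_le_sum (f := fun j => p.part j) (fun j _ => Nat.zero_le _)
    (Finset.mem_range.mpr (by omega))

lemma part_pos_lt_weight {p : YPart} {i : ℕ} (h : 0 < p.part i) : i < weight p := by
  rw [weight_eq_sum' p (le_max_left (nb p) (i+1))]
  calc i < ∑ j ∈ Finset.range (i+1), p.part j := by
        have : ∀ j ∈ Finset.range (i+1), 1 ≤ p.part j := by
          intro j hj
          have := p.antitone' (Nat.lt_succ_iff.mp (Finset.mem_range.mp hj))
          omega
        calc i < i + 1 := by omega
        _ = ∑ _j ∈ Finset.range (i+1), 1 := by simp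
        _ ≤ _ := Finset.sum_le_sum this
    _ ≤ _ := Finset.sum_le_sum_of_subset (by
        intro j hj
        simp only [Finset.mem_range] at *
        omega)

/-- the finiteness workhorse -/
lemma finite_le (q : YPart) : {r : YPart | r ≤ q}.Finite := by
  rw [Set.finite_coe_iff.symm]
  apply Finite.of_injective (fun r : {r : YPart | r ≤ q} =>
    (fun i : Fin (nb q) => (⟨r.1.part i, by
      have := r.2 i
      have h2 := part_le_weight q i
      have := le_trans this (part_le_weight q i |>.trans (le_refl _))
      exact Nat.lt_succ_of_le (le_trans (r.2 i) (by
        have := q.antitone' (Nat.zero_le i.1)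
        omega))⟩ : Fin (q.part 0 + 1))))
  intro r s h
  apply Subtype.ext
  apply ext'
  intro i
  by_cases hi : i < nb q
  · have := congrFun h ⟨i, hi⟩
    simpa using this
  · have h1 : r.1.part i = 0 := by
      have := r.2 i
      have := part_nb (p := q) (i := i) (by omega)
      omega
    have h2 : s.1.part i = 0 := by
      have := s.2 i
      have := part_nb (p := q) (i := i) (by omega)
      omega
    rw [h1, h2]

/-- partitions of bounded weight form a finite set -/
lemma finite_weight_le (c : ℕ) : {q : YPart | weight q ≤ c}.Finite := by
  have hQ : ∃ Q : YPart, ∀ i, Q.part i = if i < c then c else 0 := by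
    refine ⟨⟨fun i => if i < c then c else 0, ?_, ⟨c, fun n hn => by simp; omega⟩⟩, fun i => rfl⟩
    intro a b hab
    simp only
    split <;> split <;> omega
  obtain ⟨Q, hQ⟩ := hQ
  apply Set.Finite.subset (finite_le Q)
  intro q hq
  simp only [Set.mem_setOf_eq] at *
  intro i
  rw [hQ]
  split
  · exact le_trans (part_le_weight q i) hq
  · rename_i hi
    by_contra hc
    have := part_pos_lt_weight (p := q) (i := i) (by omega)
    omega
lemma exists_box_below {p q : YPart} (h : p < q) :
    ∃ r : YPart, p ≤ r ∧ (∃ i, r.part i + 1 = q.part i ∧ ∀ k, k ≠ i → r.part k = q.part k) := by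
  have hle : p ≤ q := h.le
  have hne : p ≠ q := h.ne
  have hS : {i : ℕ | p.part i ≠ q.part i}.Nonempty := by
    by_contra hc
    rw [Set.not_nonempty_iff_eq_empty] at hc
    refine hne (ext' fun i => ?_)
    by_contra hd
    have : i ∈ {i : ℕ | p.part i ≠ q.part i} := hd
    rw [hc] at this
    exact this
  have hbdd : BddAbove {i : ℕ | p.part i ≠ q.part i} := by
    refine ⟨nb q, fun i hi => ?_⟩
    simp only [Set.mem_setOf_eq] at hi
    by_contra hc
    push_neg at hc
    have h1 : q.part i = 0 := part_nb (le_of_lt hc)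
    have h2 := hle i
    omega
  set i := sSup {i : ℕ | p.part i ≠ q.part i} with hi
  have himem : p.part i ≠ q.part i := Nat.sSup_mem hS hbdd
  have hmax : ∀ k, i < k → p.part k = q.part k := by
    intro k hk
    by_contra hc
    exact absurd (le_csSup hbdd (by simpa [Set.mem_setOf_eq] using hc)) (by omega)
  have hpi : p.part i < q.part i := lt_of_le_of_ne (hle i) himem
  set f : ℕ → ℕ := fun k => if k = i then q.part i - 1 else q.part k with hf
  have hfi : f i = q.part i - 1 := if_pos rfl
  have hfk : ∀ k, k ≠ i → f k = q.part k := fun k hk => if_neg hk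
  have hanti : Antitone f := by
    intro a b hab
    rcases eq_or_lt_of_le hab with rfl | hlt
    · exact le_refl _
    · by_cases hbi : b = i
      · rw [hfk a (by omega), hbi, hfi]
        have := q.antitone' hab
        rw [hbi] at this
        omega
      · by_cases hai : a = i
        · rw [hfk b hbi, hai, hfi]
          have h1 : p.part b = q.part b := hmax b (hai ▸ hlt)
          have h2 : p.part b ≤ p.part a := p.antitone' hab
          rw [hai] at h2
          omega
        · rw [hfk b hbi, hfk a hai]
          exact q.antitone' hab
  refine ⟨⟨f, hanti, ?_⟩, ?_, i, ?_, ?_⟩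
  · refine ⟨nb q + i + 1, fun n hn => ?_⟩
    rw [hfk n (by omega)]
    exact part_nb (by omega)
  · intro k
    show p.part k ≤ f k
    by_cases hk : k = i
    · rw [hk, hfi]; omega
    · rw [hfk k hk]; exact hle k
  · show f i + 1 = q.part i
    rw [hfi]; omega
  · intro k hk
    exact hfk k hk

lemma box_of_covBy {p q : YPart} (h : p ⋖ q) :
    ∃ i, p.part i + 1 = q.part i ∧ ∀ k, k ≠ i → p.part k = q.part k := by
  obtain ⟨r, hpr, i, hbox, hrest⟩ := exists_box_below h.lt
  have hrq : r < q := by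
    refine lt_of_le_of_ne (fun k => ?_) (fun hc => ?_)
    · by_cases hk : k = i
      · subst hk; omega
      · exact (hrest k hk).le
    · rw [hc] at hbox; omega
  have : r = p := by
    by_contra hc
    exact h.2 (lt_of_le_of_ne hpr (Ne.symm hc)) hrq
  subst this
  exact ⟨i, hbox, hrest⟩

lemma weight_covBy {p q : YPart} (h : p ⋖ q) : weight q = weight p + 1 := by
  obtain ⟨i, hbox, hrest⟩ := box_of_covBy h
  set M := max (max (nb p) (nb q)) (i+1) with hM
  rw [weight_eq_sum' p (M := M) (by omega), weight_eq_sum' q (M := M) (by omega)]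
  have : ∀ k, q.part k = p.part k + if k = i then 1 else 0 := by
    intro k
    by_cases hk : k = i
    · subst hk; simp; omega
    · rw [hrest k hk]; simp [hk]
  calc ∑ k ∈ Finset.range M, q.part k
      = ∑ k ∈ Finset.range M, (p.part k + if k = i then 1 else 0) :=
        Finset.sum_congr rfl (fun k _ => this k)
    _ = (∑ k ∈ Finset.range M, p.part k) + ∑ k ∈ Finset.range M, (if k = i then 1 else 0) :=
        Finset.sum_add_distrib
    _ = (∑ k ∈ Finset.range M, p.part k) + 1 := by
        rw [Finset.sum_ite_eq' (Finset.range M) i (fun _ => 1)]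
        simp only [Finset.mem_range]
        rw [if_pos (by omega)]

lemma covBy_iff_weight {p q : YPart} : p ⋖ q ↔ p < q ∧ weight q = weight p + 1 := by
  constructor
  · exact fun h => ⟨h.lt, weight_covBy h⟩
  · rintro ⟨hlt, hw⟩
    refine ⟨hlt, fun r h1 h2 => ?_⟩
    have w1 := weight_lt h1.le h1.ne
    have w2 := weight_lt h2.le h2.ne
    omega

lemma covBy_of_box {p q : YPart} (i : ℕ) (h1 : p.part i + 1 = q.part i)
    (h2 : ∀ k, k ≠ i → p.part k = q.part k) : p ⋖ q := by
  have hle : p ≤ q := by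
    intro k
    by_cases hk : k = i
    · subst hk; omega
    · rw [h2 k hk]
  have hne : p ≠ q := by
    intro hc
    have := congrArg (fun t : YPart => t.part i) hc
    omega
  rw [covBy_iff_weight]
  refine ⟨lt_of_le_of_ne hle hne, ?_⟩
  -- same computation as weight_covBy, reuse via a cover proof? do directly
  set M := max (max (nb p) (nb q)) (i+1) with hM
  rw [weight_eq_sum' p (M := M) (by omega), weight_eq_sum' q (M := M) (by omega)]
  have : ∀ k, q.part k = p.part k + if k = i then 1 else 0 := by
    intro k
    by_cases hk : k = i
    · subst hk; simp; omega
    · rw [← h2 k hk]; simp [hk]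
  calc ∑ k ∈ Finset.range M, q.part k
      = ∑ k ∈ Finset.range M, (p.part k + if k = i then 1 else 0) :=
        Finset.sum_congr rfl (fun k _ => this k)
    _ = (∑ k ∈ Finset.range M, p.part k) + ∑ k ∈ Finset.range M, (if k = i then 1 else 0) :=
        Finset.sum_add_distrib
    _ = (∑ k ∈ Finset.range M, p.part k) + 1 := by
        rw [Finset.sum_ite_eq' (Finset.range M) i (fun _ => 1)]
        simp only [Finset.mem_range]
        rw [if_pos (by omega)]
section SignLemmas

lemma boxRow_box {p q : YPart} {i : ℕ} (h1 : p.part i + 1 = q.part i)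
    (h2 : ∀ k, k ≠ i → p.part k = q.part k) : boxRow p q = i := by
  have hset : {k : ℕ | p.part k ≠ q.part k} = {i} := by
    ext k
    simp only [Set.mem_setOf_eq, Set.mem_singleton_iff]
    constructor
    · intro hk
      by_contra hc
      exact hk (h2 k hc)
    · intro hk
      subst hk
      omega
  rw [boxRow, hset, csInf_singleton]

lemma salpha_box {p q : YPart} {i : ℕ} (h1 : p.part i + 1 = q.part i)
    (h2 : ∀ k, k ≠ i → p.part k = q.part k) :
    salpha p q = (-1) ^ (∑ j ∈ Finset.range (i + 1), p.part j) := by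
  rw [salpha, boxRow_box h1 h2]

lemma salpha_mul_self (p q : YPart) : salpha p q * salpha p q = 1 := by
  rw [salpha, ← pow_add]
  exact Even.neg_one_pow ⟨_, rfl⟩

lemma aconj_mul_self (p : YPart) : aconj p * aconj p = 1 := by
  rw [aconj, aSign, ← pow_add]
  exact Even.neg_one_pow ⟨_, rfl⟩

lemma conj_box {p q : YPart} {i : ℕ} (h1 : p.part i + 1 = q.part i)
    (h2 : ∀ k, k ≠ i → p.part k = q.part k) (j : ℕ) :
    (conj q).part j = (conj p).part j + if j = p.part i then 1 else 0 := by
  show {k : ℕ | j + 1 ≤ q.part k}.ncard = {k : ℕ | j + 1 ≤ p.part k}.ncard + _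
  by_cases hj : j = p.part i
  · subst hj
    have hset : {k : ℕ | p.part i + 1 ≤ q.part k} = insert i {k : ℕ | p.part i + 1 ≤ p.part k} := by
      ext k
      simp only [Set.mem_setOf_eq, Set.mem_insert_iff]
      by_cases hk : k = i
      · subst hk
        constructor
        · intro _; left; rfl
        · intro _; omega
      · rw [← h2 k hk]
        constructor
        · intro h; right; exact h
        · rintro (hc | h)
          · exact absurd hc hk
          · exact h
    rw [hset, Set.ncard_insert_of_notMem (by simp) (conjSet_finite p (p.part i)), if_pos rfl]
  · have hset : {k : ℕ | j + 1 ≤ q.part k} = {k : ℕ | j + 1 ≤ p.part k} := by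
      ext k
      simp only [Set.mem_setOf_eq]
      by_cases hk : k = i
      · subst hk; omega
      · rw [h2 k hk]
    rw [hset, if_neg hj, add_zero]

lemma odd_support_finite (p : YPart) :
    (Function.support fun t : ℕ => p.part (2 * t + 1)).Finite := by
  apply Set.Finite.subset (Set.finite_Iio (nb p))
  intro t ht
  simp only [Function.mem_support] at ht
  simp only [Set.mem_Iio]
  by_contra hc
  exact ht (part_nb (by omega))

lemma aconj_box {p q : YPart} {i : ℕ} (h1 : p.part i + 1 = q.part i)
    (h2 : ∀ k, k ≠ i → p.part k = q.part k) :
    aconj q = (-1) ^ (p.part i) * aconj p := by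
  rw [aconj, aconj, aSign, aSign]
  have hsum : (∑ᶠ t : ℕ, (conj q).part (2 * t + 1)) =
      (∑ᶠ t : ℕ, (conj p).part (2 * t + 1)) +
      ∑ᶠ t : ℕ, (if 2 * t + 1 = p.part i then 1 else 0) := by
    rw [← finsum_add_distrib (odd_support_finite (conj p))
      (Set.Finite.subset (Set.finite_Iio (p.part i)) (by
        intro t ht
        have ht' : (if 2 * t + 1 = p.part i then (1 : ℕ) else 0) ≠ 0 := ht
        simp only [Set.mem_Iio]
        by_contra hc
        exact ht' (if_neg (by omega))))]
    exact finsum_congr fun t => conj_box h1 h2 (2 * t + 1)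
  rw [hsum]
  have hite : (∑ᶠ t : ℕ, (if 2 * t + 1 = p.part i then 1 else 0)) =
      if Odd (p.part i) then 1 else 0 := by
    by_cases ho : Odd (p.part i)
    · obtain ⟨m, hm⟩ := ho
      rw [if_pos ⟨m, hm⟩]
      have hfun : (fun t : ℕ => if 2 * t + 1 = p.part i then (1 : ℕ) else 0) =
          fun t => if t = m then 1 else 0 := by
        funext t
        by_cases ht : t = m
        · subst ht; rw [if_pos (by omega), if_pos rfl]
        · rw [if_neg (by omega), if_neg ht]
      rw [hfun, finsum_eq_single _ m (fun b hb => if_neg hb), if_pos rfl]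
    · rw [if_neg ho]
      apply finsum_eq_zero_of_forall_eq_zero
      intro t
      rw [if_neg]
      intro hc
      exact ho ⟨t, by omega⟩
  rw [hite, pow_add]
  rcases Nat.even_or_odd (p.part i) with he | ho
  · rw [if_neg (Nat.not_odd_iff_even.mpr he), pow_zero, mul_one, he.neg_one_pow, one_mul]
  · rw [if_pos ho, pow_one, ho.neg_one_pow]
    ring

end SignLemmas

section Lattice

noncomputable def pmin (p q : YPart) : YPart where
  part i := min (p.part i) (q.part i)
  antitone' := fun a b hab => min_le_min (p.antitone' hab) (q.antitone' hab)
  finite' := ⟨nb p, fun n hn => by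
    show min (p.part n) (q.part n) = 0
    rw [part_nb hn]
    omega⟩

noncomputable def pmax (p q : YPart) : YPart where
  part i := max (p.part i) (q.part i)
  antitone' := fun a b hab => max_le_max (p.antitone' hab) (q.antitone' hab)
  finite' := ⟨max (nb p) (nb q), fun n hn => by
    show max (p.part n) (q.part n) = 0
    rw [part_nb (p := p) (by omega), part_nb (p := q) (by omega)]
    omega⟩

lemma pmin_part (p q : YPart) (i : ℕ) : (pmin p q).part i = min (p.part i) (q.part i) := rfl
lemma pmax_part (p q : YPart) (i : ℕ) : (pmax p q).part i = max (p.part i) (q.part i) := rfl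

lemma pmin_le_left (p q : YPart) : pmin p q ≤ p := fun i => min_le_left _ _
lemma pmin_le_right (p q : YPart) : pmin p q ≤ q := fun i => min_le_right _ _
lemma le_pmax_left (p q : YPart) : p ≤ pmax p q := fun i => le_max_left _ _
lemma le_pmax_right (p q : YPart) : q ≤ pmax p q := fun i => le_max_right _ _
lemma pmax_le {p q r : YPart} (h1 : p ≤ r) (h2 : q ≤ r) : pmax p q ≤ r :=
  fun i => max_le (h1 i) (h2 i)
lemma le_pmin {p q r : YPart} (h1 : r ≤ p) (h2 : r ≤ q) : r ≤ pmin p q :=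
  fun i => le_min (h1 i) (h2 i)

lemma weight_pmin_add_pmax (p q : YPart) :
    weight (pmin p q) + weight (pmax p q) = weight p + weight q := by
  set M := max (nb p) (nb q) with hM
  have h0 : ∀ i, M ≤ i → p.part i = 0 := fun i hi => part_nb (by omega)
  have h1 : ∀ i, M ≤ i → q.part i = 0 := fun i hi => part_nb (by omega)
  rw [weight_eq_sum (p := pmin p q) (M := M) (fun i hi => by rw [pmin_part, h0 i hi, h1 i hi]; omega),
      weight_eq_sum (p := pmax p q) (M := M) (fun i hi => by rw [pmax_part, h0 i hi, h1 i hi]; omega),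
      weight_eq_sum h0, weight_eq_sum h1, ← Finset.sum_add_distrib, ← Finset.sum_add_distrib]
  exact Finset.sum_congr rfl fun i _ => by rw [pmin_part, pmax_part]; omega

lemma meet_of_covBy {x z q : YPart} (hx : x ⋖ q) (hz : z ⋖ q) (hne : x ≠ z) :
    pmax x z = q ∧ pmin x z ⋖ x ∧ pmin x z ⋖ z := by
  have hwx := weight_covBy hx
  have hwz := weight_covBy hz
  have hq : pmax x z = q := by
    by_contra hc
    have hlt : pmax x z < q := lt_of_le_of_ne (pmax_le hx.le hz.le) hc
    have hxlt : x < pmax x z := by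
      refine lt_of_le_of_ne (le_pmax_left x z) fun hc2 => ?_
      have : z ≤ x := hc2 ▸ le_pmax_right x z
      exact hne (eq_of_le_weight this (by omega)).symm
    exact hx.2 hxlt hlt
  have hwm := weight_pmin_add_pmax x z
  rw [hq] at hwm
  refine ⟨hq, ?_, ?_⟩
  · refine covBy_iff_weight.mpr ⟨lt_of_le_of_ne (pmin_le_left x z) fun hc => ?_, by omega⟩
    have : x ≤ z := hc ▸ pmin_le_right x z
    exact hne (eq_of_le_weight this (by omega))
  · refine covBy_iff_weight.mpr ⟨lt_of_le_of_ne (pmin_le_right x z) fun hc => ?_, by omega⟩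
    have : z ≤ x := hc ▸ pmin_le_left x z
    exact hne (eq_of_le_weight this (by omega)).symm

lemma join_of_covBy {x z r : YPart} (hx : r ⋖ x) (hz : r ⋖ z) (hne : x ≠ z) :
    pmin x z = r ∧ x ⋖ pmax x z ∧ z ⋖ pmax x z := by
  have hwx := weight_covBy hx
  have hwz := weight_covBy hz
  have hr : pmin x z = r := by
    by_contra hc
    have hlt : r < pmin x z := lt_of_le_of_ne (le_pmin hx.le hz.le) (Ne.symm hc)
    have hxlt : pmin x z < x := by
      refine lt_of_le_of_ne (pmin_le_left x z) fun hc2 => ?_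
      have : x ≤ z := hc2 ▸ pmin_le_right x z
      exact hne (eq_of_le_weight this (by omega))
    exact hx.2 hlt hxlt
  have hwm := weight_pmin_add_pmax x z
  rw [hr] at hwm
  refine ⟨hr, ?_, ?_⟩
  · refine covBy_iff_weight.mpr ⟨lt_of_le_of_ne (le_pmax_left x z) fun hc => ?_, by omega⟩
    have : z ≤ x := hc ▸ le_pmax_right x z
    exact hne (eq_of_le_weight this (by omega)).symm
  · refine covBy_iff_weight.mpr ⟨lt_of_le_of_ne (le_pmax_right x z) fun hc => ?_, by omega⟩
    have : x ≤ z := hc ▸ le_pmax_left x z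
    exact hne (eq_of_le_weight this (by omega))

end Lattice

section PairSign

lemma sum_box {ν x : YPart} {J : ℕ} (hJ1 : ν.part J + 1 = x.part J)
    (hJ2 : ∀ k, k ≠ J → ν.part k = x.part k) (I : ℕ) :
    ∑ j ∈ Finset.range (I + 1), x.part j =
      (∑ j ∈ Finset.range (I + 1), ν.part j) + if J < I + 1 then 1 else 0 := by
  have hx : ∀ k, x.part k = ν.part k + if k = J then 1 else 0 := by
    intro k
    by_cases hk : k = J
    · subst hk; simp; omega
    · rw [← hJ2 k hk]; simp [hk]
  calc ∑ j ∈ Finset.range (I + 1), x.part j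
      = ∑ j ∈ Finset.range (I + 1), (ν.part j + if j = J then 1 else 0) :=
        Finset.sum_congr rfl fun j _ => hx j
    _ = (∑ j ∈ Finset.range (I + 1), ν.part j) +
          ∑ j ∈ Finset.range (I + 1), (if j = J then 1 else 0) := Finset.sum_add_distrib
    _ = _ := by
        rw [Finset.sum_ite_eq' (Finset.range (I + 1)) J (fun _ => 1)]
        simp [Finset.mem_range]

lemma pair_sign {x z ν q : YPart} (hne : x ≠ z) (hνx : ν ⋖ x) (hνz : ν ⋖ z)
    (hq : pmax x z = q) :
    salpha x q * salpha z q * (aconj q * aconj x) =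
      -(salpha ν x * salpha ν z * (aconj z * aconj ν)) := by
  obtain ⟨J, hJ1, hJ2⟩ := box_of_covBy hνx
  obtain ⟨I, hI1, hI2⟩ := box_of_covBy hνz
  have hIJ : I ≠ J := by
    intro hc
    subst hc
    refine hne (ext' fun k => ?_)
    by_cases hk : k = I
    · subst hk; omega
    · rw [← hJ2 k hk, ← hI2 k hk]
  -- values of q
  have hqk : ∀ k, q.part k = ν.part k + (if k = I then 1 else 0) + (if k = J then 1 else 0) := by
    intro k
    rw [← hq]
    show max (x.part k) (z.part k) = _
    have hxk : x.part k = ν.part k + if k = J then 1 else 0 := by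
      by_cases hk : k = J
      · rw [if_pos hk, hk]; omega
      · rw [if_neg hk, ← hJ2 k hk, add_zero]
    have hzk : z.part k = ν.part k + if k = I then 1 else 0 := by
      by_cases hk : k = I
      · rw [if_pos hk, hk]; omega
      · rw [if_neg hk, ← hI2 k hk, add_zero]
    rw [hxk, hzk]
    by_cases hk1 : k = I
    · rw [if_pos hk1, if_neg (by rw [hk1]; exact hIJ)]
      omega
    · rw [if_neg hk1]
      by_cases hk2 : k = J
      · rw [if_pos hk2]; omega
      · rw [if_neg hk2]; omega
  -- box description of the top edges
  have hxqI : x.part I + 1 = q.part I := by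
    have h := hqk I
    rw [if_pos rfl, if_neg hIJ] at h
    rw [← hJ2 I hIJ]
    omega
  have hxq2 : ∀ k, k ≠ I → x.part k = q.part k := by
    intro k hk
    have h := hqk k
    rw [if_neg hk] at h
    by_cases hk2 : k = J
    · rw [if_pos hk2] at h
      rw [hk2] at h ⊢
      omega
    · rw [if_neg hk2] at h
      rw [← hJ2 k hk2]
      omega
  have hzqJ : z.part J + 1 = q.part J := by
    have h := hqk J
    rw [if_pos rfl, if_neg (Ne.symm hIJ)] at h
    rw [← hI2 J (Ne.symm hIJ)]
    omega
  have hzq2 : ∀ k, k ≠ J → z.part k = q.part k := by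
    intro k hk
    have h := hqk k
    rw [if_neg hk] at h
    by_cases hk2 : k = I
    · rw [if_pos hk2] at h
      rw [hk2] at h ⊢
      omega
    · rw [if_neg hk2] at h
      rw [← hI2 k hk2]
      omega
  -- salpha values
  rw [salpha_box hxqI hxq2, salpha_box hzqJ hzq2, salpha_box hJ1 hJ2, salpha_box hI1 hI2]
  -- aconj values
  have haq : aconj q * aconj x = (-1) ^ (ν.part I) := by
    rw [aconj_box hxqI hxq2]
    have : x.part I = ν.part I := (hJ2 I hIJ).symm
    rw [this, mul_assoc, aconj_mul_self, mul_one]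
  have haz : aconj z * aconj ν = (-1) ^ (ν.part I) := by
    rw [aconj_box hI1 hI2, mul_assoc, aconj_mul_self, mul_one]
  rw [haq, haz]
  rw [sum_box hJ1 hJ2 I, sum_box hI1 hI2 J]
  set A := ∑ j ∈ Finset.range (I + 1), ν.part j with hA
  set B := ∑ j ∈ Finset.range (J + 1), ν.part j with hB
  have hsum : (A + if J < I + 1 then 1 else 0) + (B + if I < J + 1 then 1 else 0) + ν.part I
      = (B + A + ν.part I) + 1 := by
    rcases Nat.lt_or_ge I J with h | h
    · rw [if_neg (by omega), if_pos (by omega)]; ring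
    · rw [if_pos (by omega), if_neg (by omega)]; ring
  calc (-1 : ℤ) ^ (A + if J < I + 1 then 1 else 0) * (-1) ^ (B + if I < J + 1 then 1 else 0) *
        (-1) ^ ν.part I
      = (-1) ^ ((A + if J < I + 1 then 1 else 0) + (B + if I < J + 1 then 1 else 0) + ν.part I) := by
        rw [← pow_add, ← pow_add]
    _ = (-1) ^ ((B + A + ν.part I) + 1) := by rw [hsum]
    _ = -((-1) ^ (B + A + ν.part I)) := by rw [pow_succ]; ring
    _ = -((-1 : ℤ) ^ B * (-1) ^ A * (-1) ^ ν.part I) := by rw [← pow_add, ← pow_add]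

end PairSign

section CovFinsets

lemma finite_ucov (x : YPart) : {q : YPart | x ⋖ q}.Finite := by
  apply Set.Finite.subset (finite_weight_le (weight x + 1))
  intro q hq
  simp only [Set.mem_setOf_eq] at *
  rw [weight_covBy hq]

lemma finite_lcov (x : YPart) : {r : YPart | r ⋖ x}.Finite := by
  apply Set.Finite.subset (finite_weight_le (weight x))
  intro r hr
  simp only [Set.mem_setOf_eq] at *
  exact weight_mono hr.le

noncomputable def ucovF (x : YPart) : Finset YPart := (finite_ucov x).toFinset
noncomputable def lcovF (x : YPart) : Finset YPart := (finite_lcov x).toFinset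

lemma mem_ucovF {x q : YPart} : q ∈ ucovF x ↔ x ⋖ q := by
  rw [ucovF, Set.Finite.mem_toFinset, Set.mem_setOf_eq]

lemma mem_lcovF {x r : YPart} : r ∈ lcovF x ↔ r ⋖ x := by
  rw [lcovF, Set.Finite.mem_toFinset, Set.mem_setOf_eq]

/-- The diagonal identity. -/
lemma diag_identity (x : YPart) :
    (∑ q ∈ ucovF x, aconj q * aconj x) + (∑ r ∈ lcovF x, aconj x * aconj r) = 1 := by
  set N := nb x with hN
  set g : ℕ → ℤ := fun i => (-1) ^ (x.part i) with hg
  -- up covers sum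
  have hup : (∑ q ∈ ucovF x, aconj q * aconj x) =
      ∑ i ∈ Finset.range (N + 1), (if i = 0 ∨ x.part (i - 1) ≠ x.part i then g i else 0) := by
    rw [← Finset.sum_filter]
    apply Finset.sum_bij (i := fun q _ => boxRow x q)
    · -- maps into filter
      intro q hq
      rw [mem_ucovF] at hq
      obtain ⟨i, h1, h2⟩ := box_of_covBy hq
      rw [boxRow_box h1 h2]
      simp only [Finset.mem_filter, Finset.mem_range]
      constructor
      · -- i ≤ N
        by_contra hc
        push_neg at hc
        have hxi : x.part i = 0 := part_nb (by omega)
        have hxi1 : x.part (i - 1) = 0 := part_nb (by omega)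
        have hqa : q.part (i - 1) = 0 := by rw [← h2 (i - 1) (by omega)]; exact hxi1
        have := q.antitone' (show i - 1 ≤ i by omega)
        omega
      · by_cases hi : i = 0
        · left; exact hi
        · right
          intro hc
          have h3 : x.part (i-1) = q.part (i-1) := h2 (i-1) (by omega)
          have := q.antitone' (show i - 1 ≤ i by omega)
          omega
    · -- injective
      intro q1 h1 q2 h2 heq
      rw [mem_ucovF] at h1 h2
      obtain ⟨i1, hi1, hi1'⟩ := box_of_covBy h1
      obtain ⟨i2, hi2, hi2'⟩ := box_of_covBy h2
      rw [boxRow_box hi1 hi1', boxRow_box hi2 hi2'] at heq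
      subst heq
      refine ext' fun k => ?_
      by_cases hk : k = i1
      · subst hk; omega
      · rw [← hi1' k hk, ← hi2' k hk]
    · -- surjective
      intro i hi
      simp only [Finset.mem_filter, Finset.mem_range] at hi
      obtain ⟨hiN, hadd⟩ := hi
      have haddable : i = 0 ∨ x.part i < x.part (i - 1) := by
        rcases hadd with h | h
        · left; exact h
        · right
          have := x.antitone' (show i - 1 ≤ i by omega)
          omega
      have hq : ∃ q : YPart, (∀ k, q.part k = x.part k + if k = i then 1 else 0) := by
        refine ⟨⟨fun k => x.part k + if k = i then 1 else 0, ?_, ⟨N + i + 1, fun n hn => ?_⟩⟩,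
          fun k => rfl⟩
        · intro a b hab
          simp only
          rcases eq_or_lt_of_le hab with rfl | hlt
          · exact le_refl _
          · by_cases hbi : b = i
            · subst hbi
              rw [if_pos rfl, if_neg (by omega)]
              rcases haddable with h | h
              · omega
              · have h3 : x.part (b - 1) ≤ x.part a := x.antitone' (by omega)
                omega
            · rw [if_neg hbi]
              by_cases hai : a = i
              · rw [if_pos hai]
                have := x.antitone' hab
                omega
              · rw [if_neg hai]
                have := x.antitone' hab
                omega
        · rw [if_neg (by omega), part_nb (by omega)]
      obtain ⟨q, hqk⟩ := hq
      have hbox1 : x.part i + 1 = q.part i := by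
        rw [hqk i, if_pos rfl]
      have hbox2 : ∀ k, k ≠ i → x.part k = q.part k := by
        intro k hk
        rw [hqk k, if_neg hk, add_zero]
      refine ⟨q, ?_, boxRow_box hbox1 hbox2⟩
      rw [mem_ucovF]
      exact covBy_of_box i hbox1 hbox2
    · -- values
      intro q hq
      rw [mem_ucovF] at hq
      obtain ⟨i, h1, h2⟩ := box_of_covBy hq
      rw [boxRow_box h1 h2, hg]
      simp only
      rw [aconj_box h1 h2, mul_assoc, aconj_mul_self, mul_one]
  -- down covers sum
  have hdown : (∑ r ∈ lcovF x, aconj x * aconj r) =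
      - ∑ i ∈ Finset.range (N + 1), (if x.part i ≠ x.part (i + 1) then g i else 0) := by
    rw [← Finset.sum_filter, ← Finset.sum_neg_distrib]
    apply Finset.sum_bij (i := fun r _ => boxRow r x)
    · intro r hr
      rw [mem_lcovF] at hr
      obtain ⟨i, h1, h2⟩ := box_of_covBy hr
      rw [boxRow_box h1 h2]
      simp only [Finset.mem_filter, Finset.mem_range]
      have hxpos : 0 < x.part i := by omega
      constructor
      · have := part_pos_lt_weight hxpos
        by_contra hc
        push_neg at hc
        exact absurd (part_nb (p := x) (i := i) (by omega)) (by omega)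
      · intro hc
        have h3 : r.part (i+1) = x.part (i+1) := h2 (i+1) (by omega)
        have := r.antitone' (show i ≤ i + 1 by omega)
        omega
    · intro r1 h1 r2 h2 heq
      rw [mem_lcovF] at h1 h2
      obtain ⟨i1, hi1, hi1'⟩ := box_of_covBy h1
      obtain ⟨i2, hi2, hi2'⟩ := box_of_covBy h2
      rw [boxRow_box hi1 hi1', boxRow_box hi2 hi2'] at heq
      subst heq
      refine ext' fun k => ?_
      by_cases hk : k = i1
      · subst hk; omega
      · rw [hi1' k hk, hi2' k hk]
    · intro i hi
      simp only [Finset.mem_filter, Finset.mem_range] at hi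
      obtain ⟨hiN, hrem⟩ := hi
      have hremovable : x.part (i + 1) < x.part i := by
        have := x.antitone' (show i ≤ i + 1 by omega)
        omega
      have hr : ∃ r : YPart, (∀ k, r.part k = x.part k - if k = i then 1 else 0) := by
        refine ⟨⟨fun k => x.part k - if k = i then 1 else 0, ?_, ⟨N + i + 1, fun n hn => ?_⟩⟩,
          fun k => rfl⟩
        · intro a b hab
          simp only
          rcases eq_or_lt_of_le hab with rfl | hlt
          · exact le_refl _
          · by_cases hai : a = i
            · subst hai
              rw [if_neg (by omega), if_pos rfl]
              have : x.part b ≤ x.part (a + 1) := x.antitone' (by omega)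
              omega
            · rw [if_neg hai]
              by_cases hbi : b = i
              · rw [if_pos hbi]
                have := x.antitone' hab
                omega
              · rw [if_neg hbi]
                have := x.antitone' hab
                omega
        · rw [part_nb (by omega), if_neg (by omega)]
      obtain ⟨r, hrk⟩ := hr
      have hbox1 : r.part i + 1 = x.part i := by
        rw [hrk i, if_pos rfl]
        omega
      have hbox2 : ∀ k, k ≠ i → r.part k = x.part k := by
        intro k hk
        rw [hrk k, if_neg hk]
        omega
      refine ⟨r, ?_, boxRow_box hbox1 hbox2⟩
      rw [mem_lcovF]
      exact covBy_of_box i hbox1 hbox2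
    · intro r hr
      rw [mem_lcovF] at hr
      obtain ⟨i, h1, h2⟩ := box_of_covBy hr
      rw [boxRow_box h1 h2, hg]
      simp only
      have hx : aconj x = (-1) ^ (r.part i) * aconj r := aconj_box h1 h2
      calc aconj x * aconj r = (-1) ^ (r.part i) * (aconj r * aconj r) := by rw [hx]; ring
        _ = (-1) ^ (r.part i) := by rw [aconj_mul_self, mul_one]
        _ = -(-1) ^ (x.part i) := by
            have hxi : x.part i = r.part i + 1 := by omega
            rw [hxi, pow_succ]
            ring
  rw [hup, hdown]
  -- telescoping
  set A : ℕ → ℤ := fun i => if i = 0 ∨ x.part (i - 1) ≠ x.part i then g i else 0 with hA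
  set R : ℕ → ℤ := fun i => if x.part i ≠ x.part (i + 1) then g i else 0 with hR
  have hAR : ∀ i ∈ Finset.range N, A (i + 1) - R i = g (i + 1) - g i := by
    intro i _
    rw [hA, hR]
    simp only
    simp only [Nat.add_sub_cancel]
    by_cases h : x.part i ≠ x.part (i + 1)
    · rw [if_pos (Or.inr h), if_pos h]
    · push_neg at h
      rw [if_neg (by simp [h]), if_neg (not_not_intro h)]
      rw [hg]
      simp only
      rw [h]
      ring
  have e1 : ∑ i ∈ Finset.range (N + 1), A i = A 0 + ∑ i ∈ Finset.range N, A (i + 1) := by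
    rw [Finset.sum_range_succ']
    ring
  have e2 : ∑ i ∈ Finset.range (N + 1), R i = (∑ i ∈ Finset.range N, R i) + R N := by
    rw [Finset.sum_range_succ]
  have hRN : R N = 0 := by
    rw [hR]
    simp only
    rw [if_neg]
    push_neg
    rw [part_nb (le_refl N), part_nb (by omega)]
  have hA0 : A 0 = g 0 := by rw [hA]; simp
  rw [e1, e2, hRN, add_zero, hA0]
  have : (∑ i ∈ Finset.range N, A (i + 1)) + - ∑ i ∈ Finset.range N, R i
      = ∑ i ∈ Finset.range N, (g (i + 1) - g i) := by
    rw [← Finset.sum_congr rfl hAR, Finset.sum_sub_distrib]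
    ring
  have htel : ∑ i ∈ Finset.range N, (g (i + 1) - g i) = g N - g 0 := Finset.sum_range_sub g N
  have hgN : g N = 1 := by
    rw [hg]
    simp only
    rw [part_nb (le_refl N), pow_zero]
  calc g 0 + ∑ i ∈ Finset.range N, A (i + 1) + - ∑ i ∈ Finset.range N, R i
      = g 0 + ((∑ i ∈ Finset.range N, A (i + 1)) + - ∑ i ∈ Finset.range N, R i) := by ring
    _ = g 0 + (g N - g 0) := by rw [this, htel]
    _ = 1 := by rw [hgN]; ring

end CovFinsets

section Operators

noncomputable def Uo (f : YPart → ℤ) : YPart → ℤ :=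
  fun q => ∑ r ∈ lcovF q, salpha r q * f r

noncomputable def Do (f : YPart → ℤ) : YPart → ℤ :=
  fun r => ∑ q ∈ ucovF r, salpha r q * aconj q * aconj r * f q

lemma anti (f : YPart → ℤ) (x : YPart) : Do (Uo f) x + Uo (Do f) x = f x := by
  have hD : Do (Uo f) x = ∑ q ∈ ucovF x, ∑ r ∈ lcovF q,
      salpha x q * aconj q * aconj x * (salpha r q * f r) := by
    rw [Do]
    exact Finset.sum_congr rfl fun q _ => by rw [Uo, Finset.mul_sum]
  have hU : Uo (Do f) x = ∑ r ∈ lcovF x, ∑ q ∈ ucovF r,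
      salpha r x * (salpha r q * aconj q * aconj r * f q) := by
    rw [Uo]
    exact Finset.sum_congr rfl fun r _ => by rw [Do, Finset.mul_sum]
  -- split off the diagonal terms
  have hDsplit : Do (Uo f) x =
      (∑ q ∈ ucovF x, aconj q * aconj x) * f x +
      ∑ q ∈ ucovF x, ∑ r ∈ (lcovF q).erase x,
        salpha x q * aconj q * aconj x * (salpha r q * f r) := by
    rw [hD, Finset.sum_mul, ← Finset.sum_add_distrib]
    refine Finset.sum_congr rfl fun q hq => ?_
    rw [mem_ucovF] at hq
    have hxq : x ∈ lcovF q := mem_lcovF.mpr hq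
    rw [← Finset.add_sum_erase _ _ hxq]
    have : salpha x q * aconj q * aconj x * (salpha x q * f x) = aconj q * aconj x * f x := by
      have h := salpha_mul_self x q
      calc salpha x q * aconj q * aconj x * (salpha x q * f x)
          = salpha x q * salpha x q * (aconj q * aconj x * f x) := by ring
        _ = aconj q * aconj x * f x := by rw [h]; ring
    rw [this]
  have hUsplit : Uo (Do f) x =
      (∑ r ∈ lcovF x, aconj x * aconj r) * f x +
      ∑ r ∈ lcovF x, ∑ q ∈ (ucovF r).erase x,
        salpha r x * (salpha r q * aconj q * aconj r * f q) := by
    rw [hU, Finset.sum_mul, ← Finset.sum_add_distrib]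
    refine Finset.sum_congr rfl fun r hr => ?_
    rw [mem_lcovF] at hr
    have hxr : x ∈ ucovF r := mem_ucovF.mpr hr
    rw [← Finset.add_sum_erase _ _ hxr]
    have : salpha r x * (salpha r x * aconj x * aconj r * f x) = aconj x * aconj r * f x := by
      have h := salpha_mul_self r x
      calc salpha r x * (salpha r x * aconj x * aconj r * f x)
          = salpha r x * salpha r x * (aconj x * aconj r * f x) := by ring
        _ = aconj x * aconj r * f x := by rw [h]; ring
    rw [this]
  -- off-diagonal cancellation
  have hoff : (∑ q ∈ ucovF x, ∑ r ∈ (lcovF q).erase x,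
        salpha x q * aconj q * aconj x * (salpha r q * f r)) =
      - ∑ r ∈ lcovF x, ∑ q ∈ (ucovF r).erase x,
        salpha r x * (salpha r q * aconj q * aconj r * f q) := by
    have hneg : - (∑ r ∈ lcovF x, ∑ q ∈ (ucovF r).erase x,
        salpha r x * (salpha r q * aconj q * aconj r * f q)) =
        ∑ r ∈ lcovF x, ∑ q ∈ (ucovF r).erase x,
          -(salpha r x * (salpha r q * aconj q * aconj r * f q)) := by
      rw [← Finset.sum_neg_distrib]
      exact Finset.sum_congr rfl fun r _ => by rw [← Finset.sum_neg_distrib]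
    rw [hneg]
    rw [Finset.sum_sigma' (ucovF x) (fun q => (lcovF q).erase x)
      (fun q z => salpha x q * aconj q * aconj x * (salpha z q * f z))]
    rw [Finset.sum_sigma' (lcovF x) (fun r => (ucovF r).erase x)
      (fun r z => -(salpha r x * (salpha r z * aconj z * aconj r * f z)))]
    refine Finset.sum_nbij' (i := fun p => ⟨pmin x p.2, p.2⟩) (j := fun p => ⟨pmax x p.2, p.2⟩)
      ?_ ?_ ?_ ?_ ?_
    · rintro ⟨q, z⟩ hp
      simp only [Finset.mem_sigma, Finset.mem_erase] at hp ⊢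
      obtain ⟨hq, hzx, hz⟩ := hp
      rw [mem_ucovF] at hq
      rw [mem_lcovF] at hz
      obtain ⟨-, h1, h2⟩ := meet_of_covBy hq hz (Ne.symm hzx)
      exact ⟨mem_lcovF.mpr h1, hzx, mem_ucovF.mpr h2⟩
    · rintro ⟨r, z⟩ hp
      simp only [Finset.mem_sigma, Finset.mem_erase] at hp ⊢
      obtain ⟨hr, hzx, hz⟩ := hp
      rw [mem_lcovF] at hr
      rw [mem_ucovF] at hz
      obtain ⟨-, h1, h2⟩ := join_of_covBy hr hz (fun hc => hzx (hc.symm))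
      exact ⟨mem_ucovF.mpr h1, hzx, mem_lcovF.mpr h2⟩
    · rintro ⟨q, z⟩ hp
      simp only [Finset.mem_sigma, Finset.mem_erase] at hp
      obtain ⟨hq, hzx, hz⟩ := hp
      rw [mem_ucovF] at hq
      rw [mem_lcovF] at hz
      obtain ⟨h0, -, -⟩ := meet_of_covBy hq hz (Ne.symm hzx)
      simp only [Sigma.mk.inj_iff, heq_eq_eq, and_true]
      exact h0
    · rintro ⟨r, z⟩ hp
      simp only [Finset.mem_sigma, Finset.mem_erase] at hp
      obtain ⟨hr, hzx, hz⟩ := hp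
      rw [mem_lcovF] at hr
      rw [mem_ucovF] at hz
      obtain ⟨h0, -, -⟩ := join_of_covBy hr hz (fun hc => hzx (hc.symm))
      simp only [Sigma.mk.inj_iff, heq_eq_eq, and_true]
      exact h0
    · rintro ⟨q, z⟩ hp
      simp only [Finset.mem_sigma, Finset.mem_erase] at hp
      obtain ⟨hq, hzx, hz⟩ := hp
      rw [mem_ucovF] at hq
      rw [mem_lcovF] at hz
      have hne : x ≠ z := Ne.symm hzx
      obtain ⟨h0, h1, h2⟩ := meet_of_covBy hq hz hne
      have hps := pair_sign hne h1 h2 h0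
      simp only
      linear_combination f z * hps
  rw [hDsplit, hUsplit, hoff]
  have hdiag := diag_identity x
  linear_combination f x * hdiag

lemma anti' (f : YPart → ℤ) : Do (Uo f) = f - Uo (Do f) := by
  funext x
  have h := anti f x
  simp only [Pi.sub_apply]
  linarith

lemma Uo_sub (f g : YPart → ℤ) : Uo (f - g) = Uo f - Uo g := by
  funext q
  simp only [Uo, Pi.sub_apply, ← Finset.sum_sub_distrib]
  exact Finset.sum_congr rfl fun r _ => by ring

lemma Do_sub (f g : YPart → ℤ) : Do (f - g) = Do f - Do g := by
  funext r
  simp only [Do, Pi.sub_apply, ← Finset.sum_sub_distrib]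
  exact Finset.sum_congr rfl fun q _ => by ring

lemma Upow_sub (n : ℕ) (f g : YPart → ℤ) : Uo^[n] (f - g) = Uo^[n] f - Uo^[n] g := by
  induction n generalizing f g with
  | zero => simp
  | succ n ih =>
    rw [Function.iterate_succ_apply, Function.iterate_succ_apply, Function.iterate_succ_apply,
      Uo_sub, ih]

lemma Dpow_sub (n : ℕ) (f g : YPart → ℤ) : Do^[n] (f - g) = Do^[n] f - Do^[n] g := by
  induction n generalizing f g with
  | zero => simp
  | succ n ih =>
    rw [Function.iterate_succ_apply, Function.iterate_succ_apply, Function.iterate_succ_apply,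
      Do_sub, ih]

lemma d2u (f : YPart → ℤ) : Do (Do (Uo f)) = Uo (Do (Do f)) := by
  rw [anti' f, Do_sub, anti' (Do f), sub_sub_cancel]

lemma du2 (f : YPart → ℤ) : Do (Uo (Uo f)) = Uo (Uo (Do f)) := by
  rw [anti' (Uo f), anti' f, Uo_sub, sub_sub_cancel]

lemma comm2 (b : ℕ) (f : YPart → ℤ) : Do (Do (Uo^[b] f)) = Uo^[b] (Do (Do f)) := by
  induction b generalizing f with
  | zero => simp
  | succ b ih =>
    rw [Function.iterate_succ_apply, ih (Uo f), d2u, ← Function.iterate_succ_apply]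

lemma iterate_two (g : (YPart → ℤ) → (YPart → ℤ)) (f : YPart → ℤ) : g^[2] f = g (g f) := by
  rw [Function.iterate_succ_apply, Function.iterate_one]

lemma comm_even (a b : ℕ) (f : YPart → ℤ) : Do^[2*a] (Uo^[b] f) = Uo^[b] (Do^[2*a] f) := by
  induction a generalizing f with
  | zero => simp
  | succ a ih =>
    have h2 : 2 * (a + 1) = 2 * a + 2 := by ring
    rw [h2, Function.iterate_add_apply Do (2*a) 2, iterate_two, comm2, ih,
      Function.iterate_add_apply Do (2*a) 2, iterate_two]

lemma du_even (k : ℕ) (f : YPart → ℤ) : Do (Uo^[2*k] f) = Uo^[2*k] (Do f) := by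
  induction k generalizing f with
  | zero => simp
  | succ k ih =>
    have h2 : 2 * (k + 1) = 2 * k + 2 := by ring
    rw [h2, Function.iterate_add_apply Uo (2*k) 2, iterate_two, ih, du2,
      Function.iterate_add_apply Uo (2*k) 2, iterate_two]

lemma main_even (k : ℕ) (f : YPart → ℤ) : Do^[2*k] (Uo^[2*k] f) = Uo^[2*k] (Do^[2*k] f) :=
  comm_even k (2*k) f

lemma main_odd (k : ℕ) (f : YPart → ℤ) :
    Do^[2*k+1] (Uo^[2*k+1] f) = Uo^[2*k] (Do^[2*k] f) - Uo^[2*k+1] (Do^[2*k+1] f) := by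
  have step1 : Do (Uo^[2*k+1] f) = Uo^[2*k] f - Uo^[2*k+1] (Do f) := by
    rw [Function.iterate_succ_apply, du_even, anti', Upow_sub, ← Function.iterate_succ_apply]
  rw [Function.iterate_succ_apply' Do (2*k), ← Function.iterate_succ_apply' Do (2*k),
    Function.iterate_succ_apply Do (2*k), step1, Dpow_sub, main_even,
    comm_even k (2*k+1) (Do f), ← Function.iterate_succ_apply Do (2*k)]

end Operators
end YPart

namespace SDP
open YPart
lemma chain_le_last : ∀ (l : List YPart), l.Chain' (· ⋖ ·) → ∀ q : YPart,
    l.getLast? = some q → ∀ x ∈ l, x ≤ q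
  | [] => by simp
  | [a] => by
    intro hc q hq x hx
    simp only [List.getLast?_singleton, Option.some.injEq] at hq
    simp only [List.mem_singleton] at hx
    subst hq; subst hx
    exact le_refl _
  | a :: b :: t => by
    intro hc q hq x hx
    rw [List.getLast?_cons_cons] at hq
    simp only [List.Chain', List.isChain_cons_cons] at hc
    rcases List.mem_cons.mp hx with rfl | hx'
    · exact le_trans hc.1.le (chain_le_last (b :: t) hc.2 q hq b List.mem_cons_self)
    · exact chain_le_last (b :: t) hc.2 q hq x hx'

lemma mem_chainsBetween_le {p q : YPart} {l : List YPart} (h : l ∈ chainsBetween p q) :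
    p ≤ q := by
  obtain ⟨hc, hh, hl⟩ := h
  cases l with
  | nil => simp at hh
  | cons a t =>
    have ha : p = a := by
      have := hh
      simp only [List.head?_cons, Option.some.injEq] at this
      exact this.symm
    subst ha
    exact chain_le_last _ hc q hl p List.mem_cons_self

lemma chains_self (p : YPart) : chainsBetween p p = {[p]} := by
  ext l
  constructor
  · rintro ⟨hc, hh, hl⟩
    cases l with
    | nil => simp at hh
    | cons a t =>
      have ha : p = a := by
        have := hh
        simp only [List.head?_cons, Option.some.injEq] at this
        exact this.symm
      subst ha
      cases t with
      | nil => rfl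
      | cons b t' =>
        simp only [List.Chain', List.isChain_cons_cons] at hc
        have hbp : b ≤ p := chain_le_last (b :: t') hc.2 p
          (by rw [← List.getLast?_cons_cons (a := p)]; exact hl) b List.mem_cons_self
        exact absurd (lt_of_lt_of_le hc.1.lt hbp) (lt_irrefl p)
  · rintro rfl
    exact ⟨List.isChain_singleton p, rfl, rfl⟩

lemma chains_decomp (p q : YPart) (hne : p ≠ q) :
    chainsBetween p q = ⋃ r ∈ {r : YPart | p ⋖ r}, (List.cons p) '' chainsBetween r q := by
  ext l
  constructor
  · rintro ⟨hc, hh, hl⟩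
    cases l with
    | nil => simp at hh
    | cons a t =>
      have ha : p = a := by
        have := hh
        simp only [List.head?_cons, Option.some.injEq] at this
        exact this.symm
      subst ha
      cases t with
      | nil =>
        exact absurd (by simpa using hl) hne
      | cons b t' =>
        simp only [List.Chain', List.isChain_cons_cons] at hc
        simp only [Set.mem_iUnion, Set.mem_image, Set.mem_setOf_eq]
        refine ⟨b, hc.1, b :: t', ⟨hc.2, rfl, ?_⟩, rfl⟩
        rw [← List.getLast?_cons_cons (a := p)]
        exact hl
  · intro hmem
    simp only [Set.mem_iUnion, Set.mem_image, Set.mem_setOf_eq] at hmem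
    obtain ⟨r, hpr, l', ⟨hc', hh', hl'⟩, rfl⟩ := hmem
    cases l' with
    | nil => simp at hh'
    | cons b t =>
      have hb : b = r := by simpa using hh'
      subst hb
      refine ⟨List.isChain_cons_cons.mpr ⟨hpr, hc'⟩, rfl, ?_⟩
      rw [List.getLast?_cons_cons]
      exact hl'

lemma chains_finite : ∀ (n : ℕ) (p q : YPart), weight q + 1 - weight p ≤ n →
    (chainsBetween p q).Finite := by
  intro n
  induction n with
  | zero =>
    intro p q hn
    convert Set.finite_empty
    rw [Set.eq_empty_iff_forall_notMem]
    intro l hl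
    have := weight_mono (mem_chainsBetween_le hl)
    omega
  | succ n ih =>
    intro p q hn
    by_cases hpq : p = q
    · subst hpq
      rw [chains_self]
      exact Set.finite_singleton _
    · rw [chains_decomp p q hpq]
      apply Set.Finite.biUnion (finite_ucov p)
      intro r hr
      simp only [Set.mem_setOf_eq] at hr
      apply Set.Finite.image
      apply ih
      have := weight_covBy hr
      omega

lemma chainsBetween_finite (p q : YPart) : (chainsBetween p q).Finite :=
  chains_finite (weight q + 1 - weight p) p q (le_refl _)

lemma eskew_self (s : YPart → YPart → ℤ) (p : YPart) : eskew s p p = 1 := by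
  rw [eskew, chains_self, finsum_mem_singleton]
  rfl

lemma eskew_zero (s : YPart → YPart → ℤ) {p q : YPart} (h : ¬ p ≤ q) : eskew s p q = 0 := by
  rw [eskew]
  have : chainsBetween p q = ∅ := by
    rw [Set.eq_empty_iff_forall_notMem]
    intro l hl
    exact h (mem_chainsBetween_le hl)
  rw [this, finsum_mem_empty]

/-- first-step recursion -/
lemma eskew_rec {p q : YPart} (hne : p ≠ q) :
    eskew salpha p q = ∑ r ∈ ucovF p, salpha p r * eskew salpha r q := by
  rw [eskew, chains_decomp p q hne]
  rw [finsum_mem_biUnion]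
  · rw [finsum_mem_eq_finite_toFinset_sum _ (finite_ucov p)]
    have hFeq : (finite_ucov p).toFinset = ucovF p := rfl
    rw [hFeq]
    refine Finset.sum_congr rfl fun r hr => ?_
    rw [mem_ucovF] at hr
    rw [finsum_mem_image (fun l1 _ l2 _ h => by injection h)]
    rw [finsum_mem_eq_finite_toFinset_sum _ (chainsBetween_finite r q), eskew,
      finsum_mem_eq_finite_toFinset_sum _ (chainsBetween_finite r q), Finset.mul_sum]
    refine Finset.sum_congr rfl fun l hl => ?_
    rw [Set.Finite.mem_toFinset] at hl
    obtain ⟨hc, hh, hlast⟩ := hl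
    cases l with
    | nil => simp at hh
    | cons b t =>
      have hb : b = r := by simpa using hh
      subst hb
      rfl
  · -- pairwise disjoint
    intro r1 h1 r2 h2 hne12
    simp only [Function.onFun]
    rw [Set.disjoint_left]
    rintro l ⟨l1, hl1, rfl⟩ ⟨l2, hl2, heq⟩
    obtain rfl : l2 = l1 := by injection heq

    obtain ⟨-, hh1, -⟩ := hl1
    obtain ⟨-, hh2, -⟩ := hl2
    rw [hh1] at hh2
    exact hne12 (by injection hh2)
  · exact finite_ucov p
  · intro r hr
    exact Set.Finite.image _ (chainsBetween_finite r q)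

end SDP

namespace YPart
open SDP
section Kernel

lemma finite_below (q : YPart) (n : ℕ) :
    {r : YPart | r ≤ q ∧ weight r + n = weight q}.Finite :=
  Set.Finite.subset (finite_le q) (fun r hr => hr.1)

noncomputable def belowF (q : YPart) (n : ℕ) : Finset YPart := (finite_below q n).toFinset

lemma mem_belowF {q r : YPart} {n : ℕ} :
    r ∈ belowF q n ↔ r ≤ q ∧ weight r + n = weight q := by
  rw [belowF, Set.Finite.mem_toFinset]
  rfl

lemma finite_above (r : YPart) (n : ℕ) :
    {q : YPart | r ≤ q ∧ weight q = weight r + n}.Finite :=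
  Set.Finite.subset (finite_weight_le (weight r + n)) (fun q hq => le_of_eq hq.2)

noncomputable def aboveF (r : YPart) (n : ℕ) : Finset YPart := (finite_above r n).toFinset

lemma mem_aboveF {r q : YPart} {n : ℕ} :
    q ∈ aboveF r n ↔ r ≤ q ∧ weight q = weight r + n := by
  rw [aboveF, Set.Finite.mem_toFinset]
  rfl

lemma K1 (n : ℕ) (h : YPart → ℤ) (q : YPart) :
    Uo^[n] h q = ∑ r ∈ belowF q n, eskew salpha r q * h r := by
  induction n generalizing h q with
  | zero =>
    simp only [Function.iterate_zero, id_eq]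
    have hset : belowF q 0 = {q} := Finset.ext fun r => by
      rw [mem_belowF, Finset.mem_singleton]
      constructor
      · rintro ⟨h1, h2⟩
        exact eq_of_le_weight h1 (by omega)
      · rintro rfl
        exact ⟨le_refl _, by omega⟩
    rw [hset, Finset.sum_singleton, eskew_self, one_mul]
  | succ n ih =>
    rw [Function.iterate_succ_apply, ih]
    set T := (finite_weight_le (weight q)).toFinset with hT
    have memT : ∀ x : YPart, x ∈ T ↔ weight x ≤ weight q := fun x => by
      rw [hT, Set.Finite.mem_toFinset]
      rfl
    set G : YPart → YPart → ℤ := fun t r =>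
      (if r ⋖ t then salpha r t * h r else 0) *
      (if weight t + n = weight q then eskew salpha t q else 0) with hG
    have e1 : (∑ t ∈ belowF q n, eskew salpha t q * Uo h t) = ∑ t ∈ T, ∑ r ∈ T, G t r := by
      have hsubset : belowF q n ⊆ T :=
        fun t ht => (memT t).mpr (by have := (mem_belowF.mp ht).2; omega)
      refine Eq.trans (Finset.sum_congr rfl fun t ht => ?_)
        (Finset.sum_subset hsubset fun t ht hnt => ?_)
      · obtain ⟨ht1, ht2⟩ := mem_belowF.mp ht
        have hfilter : T.filter (fun r => r ⋖ t) = lcovF t := Finset.ext fun r => by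
          rw [Finset.mem_filter, mem_lcovF, memT]
          constructor
          · exact fun hr => hr.2
          · intro hr
            refine ⟨?_, hr⟩
            have := weight_covBy hr
            omega
        calc eskew salpha t q * Uo h t
            = (∑ r ∈ lcovF t, salpha r t * h r) * eskew salpha t q := by rw [Uo]; ring
          _ = (∑ r ∈ T.filter (fun r => r ⋖ t), salpha r t * h r) * eskew salpha t q := by
              rw [hfilter]
          _ = (∑ r ∈ T, if r ⋖ t then salpha r t * h r else 0) * eskew salpha t q := by
              rw [Finset.sum_filter]
          _ = ∑ r ∈ T, G t r := by
              rw [Finset.sum_mul, hG]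
              refine Finset.sum_congr rfl fun r _ => ?_
              simp only
              rw [if_pos ht2]
      · -- t ∈ T but not in belowF q n
        apply Finset.sum_eq_zero
        intro r _
        rw [hG]
        simp only
        by_cases hw : weight t + n = weight q
        · have hnle : ¬ t ≤ q := by
            intro hle
            exact hnt (mem_belowF.mpr ⟨hle, hw⟩)
          rw [if_pos hw, eskew_zero salpha hnle, mul_zero]
        · rw [if_neg hw, mul_zero]
    have e2 : (∑ r ∈ belowF q (n+1), eskew salpha r q * h r) = ∑ r ∈ T, ∑ t ∈ T, G t r := by
      have hsubset : belowF q (n+1) ⊆ T :=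
        fun r hr => (memT r).mpr (by have := (mem_belowF.mp hr).2; omega)
      refine Eq.trans (Finset.sum_congr rfl fun r hr => ?_)
        (Finset.sum_subset hsubset fun r hr hnr => ?_)
      · obtain ⟨hr1, hr2⟩ := mem_belowF.mp hr
        have hrq : r ≠ q := fun hc => by rw [hc] at hr2; omega
        have hfilter : T.filter (fun t => r ⋖ t) = ucovF r := Finset.ext fun t => by
          rw [Finset.mem_filter, mem_ucovF, memT]
          constructor
          · exact fun ht => ht.2
          · intro ht
            refine ⟨?_, ht⟩
            have := weight_covBy ht
            omega
        have hguard : ∀ t, r ⋖ t → weight t + n = weight q := by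
          intro t ht
          have := weight_covBy ht
          omega
        calc eskew salpha r q * h r
            = (∑ t ∈ ucovF r, salpha r t * eskew salpha t q) * h r := by
              rw [eskew_rec hrq]
          _ = ∑ t ∈ ucovF r, salpha r t * eskew salpha t q * h r := by rw [Finset.sum_mul]
          _ = ∑ t ∈ ucovF r, G t r := by
              refine Finset.sum_congr rfl fun t ht => ?_
              rw [mem_ucovF] at ht
              rw [hG]
              simp only
              rw [if_pos ht, if_pos (hguard t ht)]
              ring
          _ = ∑ t ∈ T.filter (fun t => r ⋖ t), G t r := by rw [hfilter]
          _ = ∑ t ∈ T, if r ⋖ t then G t r else 0 := by rw [Finset.sum_filter]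
          _ = ∑ t ∈ T, G t r := by
              refine Finset.sum_congr rfl fun t _ => ?_
              by_cases hrt : r ⋖ t
              · rw [if_pos hrt]
              · rw [if_neg hrt, hG]
                simp only
                rw [if_neg hrt, zero_mul]
      · apply Finset.sum_eq_zero
        intro t _
        rw [hG]
        simp only
        by_cases hrt : r ⋖ t
        · by_cases hw : weight t + n = weight q
          · have hwr := weight_covBy hrt
            have hnle : ¬ r ≤ q := by
              intro hle
              exact hnr (mem_belowF.mpr ⟨hle, by omega⟩)
            have hnt : ¬ t ≤ q := fun hle => hnle (le_trans hrt.le hle)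
            rw [if_pos hw, eskew_zero salpha hnt, mul_zero]
          · rw [if_neg hw, mul_zero]
        · rw [if_neg hrt, zero_mul]
    rw [e1, e2, Finset.sum_comm]

lemma K2 (n : ℕ) (h : YPart → ℤ) (r : YPart) :
    Do^[n] h r = ∑ q ∈ aboveF r n, eskew salpha r q * aconj q * aconj r * h q := by
  induction n generalizing h r with
  | zero =>
    simp only [Function.iterate_zero, id_eq]
    have hset : aboveF r 0 = {r} := Finset.ext fun q => by
      rw [mem_aboveF, Finset.mem_singleton]
      constructor
      · rintro ⟨h1, h2⟩
        exact (eq_of_le_weight h1 (by omega)).symm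
      · rintro rfl
        exact ⟨le_refl _, by omega⟩
    rw [hset, Finset.sum_singleton, eskew_self]
    have := aconj_mul_self r
    linear_combination (-(h r)) * this
  | succ n ih =>
    have hDo : Do (Do^[n] h) r = ∑ x ∈ ucovF r, salpha r x * aconj x * aconj r * Do^[n] h x := rfl
    rw [Function.iterate_succ_apply', hDo]
    set T := (finite_weight_le (weight r + (n+1))).toFinset with hT
    have memT : ∀ x : YPart, x ∈ T ↔ weight x ≤ weight r + (n+1) := fun x => by
      rw [hT, Set.Finite.mem_toFinset]
      rfl
    set G : YPart → YPart → ℤ := fun x q =>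
      (if r ⋖ x then salpha r x else 0) *
      (if weight q = weight r + (n+1) then eskew salpha x q * aconj q * aconj r * h q else 0)
      with hG
    have e1 : (∑ x ∈ ucovF r, salpha r x * aconj x * aconj r * Do^[n] h x)
        = ∑ x ∈ T, ∑ q ∈ T, G x q := by
      have hsubset : ucovF r ⊆ T := fun x hx => (memT x).mpr (by
        have := weight_covBy (mem_ucovF.mp hx)
        omega)
      refine Eq.trans (Finset.sum_congr rfl fun x hx => ?_)
        (Finset.sum_subset hsubset fun x hx hnx => ?_)
      · have hxc := mem_ucovF.mp hx
        have hwx := weight_covBy hxc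
        rw [ih]
        have hsub : aboveF x n ⊆ T := fun q hq => by
          rw [mem_aboveF] at hq
          rw [memT]
          omega
        have hsum : (∑ q ∈ T, if weight q = weight r + (n+1)
              then eskew salpha x q * aconj q * aconj r * h q else 0)
            = ∑ q ∈ aboveF x n, eskew salpha x q * aconj q * aconj r * h q := by
          rw [← Finset.sum_filter]
          symm
          apply Finset.sum_subset
          · intro q hq
            rw [mem_aboveF] at hq
            rw [Finset.mem_filter, memT]
            exact ⟨by omega, by omega⟩
          · intro q hq hnq
            rw [Finset.mem_filter, memT] at hq
            have hnle : ¬ x ≤ q := by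
              intro hle
              exact hnq (mem_aboveF.mpr ⟨hle, by omega⟩)
            rw [eskew_zero salpha hnle]
            ring
        calc salpha r x * aconj x * aconj r *
              (∑ q ∈ aboveF x n, eskew salpha x q * aconj q * aconj x * h q)
            = ∑ q ∈ aboveF x n, salpha r x * (eskew salpha x q * aconj q * aconj r * h q) *
                (aconj x * aconj x) := by
              rw [Finset.mul_sum]
              refine Finset.sum_congr rfl fun q _ => ?_
              ring
          _ = ∑ q ∈ aboveF x n, salpha r x * (eskew salpha x q * aconj q * aconj r * h q) := by
              refine Finset.sum_congr rfl fun q _ => ?_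
              rw [aconj_mul_self, mul_one]
          _ = salpha r x * ∑ q ∈ aboveF x n, eskew salpha x q * aconj q * aconj r * h q := by
              rw [Finset.mul_sum]
          _ = ∑ q ∈ T, G x q := by
              rw [hG]
              simp only
              rw [← hsum, Finset.mul_sum]
              refine Finset.sum_congr rfl fun q _ => ?_
              rw [if_pos hxc]
      · apply Finset.sum_eq_zero
        intro q _
        rw [hG]
        simp only
        rw [if_neg (fun hc => hnx (mem_ucovF.mpr hc)), zero_mul]
    have e2 : (∑ q ∈ aboveF r (n+1), eskew salpha r q * aconj q * aconj r * h q)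
        = ∑ q ∈ T, ∑ x ∈ T, G x q := by
      have hsubset : aboveF r (n+1) ⊆ T :=
        fun q hq => (memT q).mpr (le_of_eq (mem_aboveF.mp hq).2)
      refine Eq.trans (Finset.sum_congr rfl fun q hq => ?_)
        (Finset.sum_subset hsubset fun q hq hnq => ?_)
      · obtain ⟨hq1, hq2⟩ := mem_aboveF.mp hq
        have hrq : r ≠ q := fun hc => by rw [← hc] at hq2; omega
        have hfilter : T.filter (fun x => r ⋖ x) = ucovF r := Finset.ext fun x => by
          rw [Finset.mem_filter, mem_ucovF, memT]
          constructor
          · exact fun hx => hx.2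
          · intro hx
            refine ⟨?_, hx⟩
            have := weight_covBy hx
            omega
        calc eskew salpha r q * aconj q * aconj r * h q
            = (∑ x ∈ ucovF r, salpha r x * eskew salpha x q) * (aconj q * aconj r * h q) := by
              rw [eskew_rec hrq]
              ring
          _ = ∑ x ∈ ucovF r, salpha r x * (eskew salpha x q * aconj q * aconj r * h q) := by
              rw [Finset.sum_mul]
              refine Finset.sum_congr rfl fun x _ => ?_
              ring
          _ = ∑ x ∈ ucovF r, G x q := by
              refine Finset.sum_congr rfl fun x hx => ?_
              rw [mem_ucovF] at hx
              rw [hG]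
              simp only
              rw [if_pos hx, if_pos hq2]
          _ = ∑ x ∈ T.filter (fun x => r ⋖ x), G x q := by rw [hfilter]
          _ = ∑ x ∈ T, if r ⋖ x then G x q else 0 := by rw [Finset.sum_filter]
          _ = ∑ x ∈ T, G x q := by
              refine Finset.sum_congr rfl fun x _ => ?_
              by_cases hrx : r ⋖ x
              · rw [if_pos hrx]
              · rw [if_neg hrx, hG]
                simp only
                rw [if_neg hrx, zero_mul]
      · apply Finset.sum_eq_zero
        intro x _
        rw [hG]
        simp only
        by_cases hrx : r ⋖ x
        · by_cases hw : weight q = weight r + (n+1)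
          · have hnle : ¬ r ≤ q := by
              intro hle
              exact hnq (mem_aboveF.mpr ⟨hle, hw⟩)
            have hnx : ¬ x ≤ q := fun hle => hnle (le_trans hrx.le hle)
            rw [if_pos hw, eskew_zero salpha hnx]
            ring
          · rw [if_neg hw, mul_zero]
        · rw [if_neg hrx, zero_mul]
    rw [e1] at *
    rw [e2, Finset.sum_comm]

end Kernel

section Assembly

noncomputable def delta (p : YPart) : YPart → ℤ := fun r => if r = p then 1 else 0

lemma LHS_eq (p : YPart) (n : ℕ) :
    aconj p * (Do^[n] (Uo^[n] (delta p)) p) =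
      ∑ q ∈ aboveF p n, aconj q * (eskew salpha p q) ^ 2 := by
  rw [K2 n (Uo^[n] (delta p)) p, Finset.mul_sum]
  refine Finset.sum_congr rfl fun q hq => ?_
  obtain ⟨hq1, hq2⟩ := mem_aboveF.mp hq
  rw [K1 n (delta p) q]
  have hmem : p ∈ belowF q n := mem_belowF.mpr ⟨hq1, by omega⟩
  have hterm : (∑ r ∈ belowF q n, eskew salpha r q * delta p r) = eskew salpha p q := by
    rw [Finset.sum_congr rfl (fun r (_ : r ∈ belowF q n) => by
      show eskew salpha r q * delta p r = if r = p then eskew salpha p q else 0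
      unfold delta
      by_cases hrp : r = p
      · rw [if_pos hrp, if_pos hrp, hrp, mul_one]
      · rw [if_neg hrp, if_neg hrp, mul_zero])]
    rw [Finset.sum_ite_eq' (belowF q n) p (fun _ => eskew salpha p q), if_pos hmem]
  rw [hterm]
  have := aconj_mul_self p
  linear_combination ((eskew salpha p q) ^ 2 * aconj q) * this

lemma RHS_eq (p : YPart) (m : ℕ) :
    aconj p * (Uo^[m] (Do^[m] (delta p)) p) =
      ∑ r ∈ belowF p m, aconj r * (eskew salpha r p) ^ 2 := by
  rw [K1 m (Do^[m] (delta p)) p, Finset.mul_sum]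
  refine Finset.sum_congr rfl fun r hr => ?_
  obtain ⟨hr1, hr2⟩ := mem_belowF.mp hr
  rw [K2 m (delta p) r]
  have hmem : p ∈ aboveF r m := mem_aboveF.mpr ⟨hr1, by omega⟩
  have hterm : (∑ q ∈ aboveF r m, eskew salpha r q * aconj q * aconj r * delta p q)
      = eskew salpha r p * aconj p * aconj r := by
    rw [Finset.sum_congr rfl (fun q (_ : q ∈ aboveF r m) => by
      show eskew salpha r q * aconj q * aconj r * delta p q =
        if q = p then eskew salpha r p * aconj p * aconj r else 0
      unfold delta
      by_cases hqp : q = p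
      · rw [if_pos hqp, if_pos hqp, hqp, mul_one]
      · rw [if_neg hqp, if_neg hqp, mul_zero])]
    rw [Finset.sum_ite_eq' (aboveF r m) p (fun _ => eskew salpha r p * aconj p * aconj r),
      if_pos hmem]
  rw [hterm]
  have := aconj_mul_self p
  linear_combination ((eskew salpha r p) ^ 2 * aconj r) * this

theorem statement16x (p : YPart) (n : ℕ) (hn : 1 ≤ n) :
    (Even n →
      (∑ᶠ q ∈ {q : YPart | p ≤ q ∧ YPart.weight q = YPart.weight p + n},
        YPart.aconj q * (eskew YPart.salpha p q) ^ 2) =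
      (∑ᶠ r ∈ {r : YPart | r ≤ p ∧ YPart.weight r + n = YPart.weight p},
        YPart.aconj r * (eskew YPart.salpha r p) ^ 2)) ∧
    (Odd n →
      (∑ᶠ q ∈ {q : YPart | p ≤ q ∧ YPart.weight q = YPart.weight p + n},
        YPart.aconj q * (eskew YPart.salpha p q) ^ 2) =
      (∑ᶠ r ∈ {r : YPart | r ≤ p ∧ YPart.weight r + n = YPart.weight p + 1},
        YPart.aconj r * (eskew YPart.salpha r p) ^ 2) -
      (∑ᶠ r ∈ {r : YPart | r ≤ p ∧ YPart.weight r + n = YPart.weight p},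
        YPart.aconj r * (eskew YPart.salpha r p) ^ 2)) := by
  have hLHS : (∑ᶠ q ∈ {q : YPart | p ≤ q ∧ YPart.weight q = YPart.weight p + n},
      YPart.aconj q * (eskew YPart.salpha p q) ^ 2) =
      ∑ q ∈ aboveF p n, aconj q * (eskew salpha p q) ^ 2 := by
    rw [finsum_mem_eq_finite_toFinset_sum _ (finite_above p n)]
    rfl
  have hRHS : (∑ᶠ r ∈ {r : YPart | r ≤ p ∧ YPart.weight r + n = YPart.weight p},
      YPart.aconj r * (eskew YPart.salpha r p) ^ 2) =
      ∑ r ∈ belowF p n, aconj r * (eskew salpha r p) ^ 2 := by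
    rw [finsum_mem_eq_finite_toFinset_sum _ (finite_below p n)]
    rfl
  constructor
  · intro hev
    obtain ⟨k, hk⟩ := hev
    have h2k : n = 2 * k := by omega
    rw [hLHS, hRHS, ← LHS_eq p n, ← RHS_eq p n, h2k, main_even k (delta p)]
  · intro hodd
    obtain ⟨k, hk⟩ := hodd
    have hRHS2 : (∑ᶠ r ∈ {r : YPart | r ≤ p ∧ YPart.weight r + n = YPart.weight p + 1},
        YPart.aconj r * (eskew YPart.salpha r p) ^ 2) =
        ∑ r ∈ belowF p (n - 1), aconj r * (eskew salpha r p) ^ 2 := by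
      have hseteq : {r : YPart | r ≤ p ∧ YPart.weight r + n = YPart.weight p + 1} =
          {r : YPart | r ≤ p ∧ YPart.weight r + (n - 1) = YPart.weight p} := by
        ext r
        simp only [Set.mem_setOf_eq]
        constructor
        · rintro ⟨h1, h2⟩; exact ⟨h1, by omega⟩
        · rintro ⟨h1, h2⟩; exact ⟨h1, by omega⟩
      rw [hseteq, finsum_mem_eq_finite_toFinset_sum _ (finite_below p (n - 1))]
      rfl
    rw [hLHS, hRHS, hRHS2, ← LHS_eq p n, ← RHS_eq p n, ← RHS_eq p (n - 1)]
    have hk1 : n = 2 * k + 1 := hk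
    have hk2 : n - 1 = 2 * k := by omega
    rw [hk2, hk1, main_odd k (delta p)]
    simp only [Pi.sub_apply]
    ring

end Assembly
end YPart


/-- for a fixed partition `λ` and `n ≥ 1`,
`∑_{μ ⊇ λ, |μ|=|λ|+n} a'(μ) e_α(μ/λ)²` equals
`∑_{ν ⊆ λ, |ν|=|λ|−n} a'(ν) e_α(λ/ν)²` if `n` is even, and
`∑_{ν ⊆ λ, |ν|=|λ|−n+1} a'(ν) e_α(λ/ν)² − ∑_{ν ⊆ λ, |ν|=|λ|−n} a'(ν) e_α(λ/ν)²`
if `n` is odd. -/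
theorem statement16 (p : YPart) (n : ℕ) (hn : 1 ≤ n) :
    (Even n →
      (∑ᶠ q ∈ {q : YPart | p ≤ q ∧ YPart.weight q = YPart.weight p + n},
        YPart.aconj q * (SDP.eskew YPart.salpha p q) ^ 2) =
      (∑ᶠ r ∈ {r : YPart | r ≤ p ∧ YPart.weight r + n = YPart.weight p},
        YPart.aconj r * (SDP.eskew YPart.salpha r p) ^ 2)) ∧
    (Odd n →
      (∑ᶠ q ∈ {q : YPart | p ≤ q ∧ YPart.weight q = YPart.weight p + n},
        YPart.aconj q * (SDP.eskew YPart.salpha p q) ^ 2) =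
      (∑ᶠ r ∈ {r : YPart | r ≤ p ∧ YPart.weight r + n = YPart.weight p + 1},
        YPart.aconj r * (SDP.eskew YPart.salpha r p) ^ 2) -
      (∑ᶠ r ∈ {r : YPart | r ≤ p ∧ YPart.weight r + n = YPart.weight p},
        YPart.aconj r * (SDP.eskew YPart.salpha r p) ^ 2)) :=
  YPart.statement16x p n hn
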